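/- The set of pure Nash equilibria of the constrained rate allocation game is a convex subset of the capacity region 𝒞. -/

import Mathlib

open scoped Classical

/-- the set of pure Nash equilibria of the constrained rate allocation
game is a convex subset of the capacity region 𝒞. -/
theorem pure_nash_set_convex
    (N : ℕ) (hN : 2 ≤ N)
    (P h : Fin N → ℝ) (σ2 : ℝ)
    (hP : ∀ i, 0 < P i) (hh : ∀ i, 0 < h i) (hσ : 0 < σ2)
    (g : Fin N → ℝ → ℝ)
    (hg : ∀ i, StrictMonoOn (g i) (Set.Ici 0))
    (hgpos : ∀ i x, 0 ≤ x → 0 < g i x)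
    (C : Finset (Fin N) → ℝ)
    (hC : ∀ Ω : Finset (Fin N), C Ω = Real.log (1 + (∑ i ∈ Ω, P i * h i) / σ2))
    (𝒞 : Set (Fin N → ℝ))
    (h𝒞 : ∀ α, α ∈ 𝒞 ↔ ((∀ i, 0 ≤ α i) ∧
      ∀ Ω : Finset (Fin N), Ω.Nonempty → ∑ i ∈ Ω, α i ≤ C Ω))
    (u : Fin N → (Fin N → ℝ) → ℝ)
    (hu : ∀ i α, u i α = if α ∈ 𝒞 then g i (α i) else 0)
    :
    Convex ℝ {α : Fin N → ℝ | α ∈ 𝒞 ∧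
        ∀ i : Fin N, ∀ x : ℝ, 0 ≤ x → Function.update α i x ∈ 𝒞 →
          u i (Function.update α i x) ≤ u i α} ∧
      {α : Fin N → ℝ | α ∈ 𝒞 ∧
        ∀ i : Fin N, ∀ x : ℝ, 0 ≤ x → Function.update α i x ∈ 𝒞 →
          u i (Function.update α i x) ≤ u i α} ⊆ 𝒞 := by
  have hPh : ∀ i, 0 < P i * h i := fun i => mul_pos (hP i) (hh i)
  have hCempty : C (∅ : Finset (Fin N)) = 0 := by
    rw [hC]; simp
  -- every constraint (including the empty set) holds for points of 𝒞
  have hle : ∀ α ∈ 𝒞, ∀ Ω : Finset (Fin N), ∑ i ∈ Ω, α i ≤ C Ω := by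
    intro α hα Ω
    rcases Ω.eq_empty_or_nonempty with rfl | hne
    · simp [hCempty]
    · exact ((h𝒞 α).1 hα).2 Ω hne
  -- submodularity of C
  have hsub : ∀ A B : Finset (Fin N), C (A ∪ B) + C (A ∩ B) ≤ C A + C B := by
    intro A B
    have hS0 : ∀ Ω : Finset (Fin N), 0 ≤ ∑ i ∈ Ω, P i * h i :=
      fun Ω => Finset.sum_nonneg fun i _ => (hPh i).le
    have hunion : (∑ i ∈ A ∪ B, P i * h i) + ∑ i ∈ A ∩ B, P i * h i
        = (∑ i ∈ A, P i * h i) + ∑ i ∈ B, P i * h i := Finset.sum_union_inter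
    have hrA : (∑ i ∈ A ∩ B, P i * h i) ≤ ∑ i ∈ A, P i * h i :=
      Finset.sum_le_sum_of_subset_of_nonneg Finset.inter_subset_left
        (fun i _ _ => (hPh i).le)
    have hrB : (∑ i ∈ A ∩ B, P i * h i) ≤ ∑ i ∈ B, P i * h i :=
      Finset.sum_le_sum_of_subset_of_nonneg Finset.inter_subset_right
        (fun i _ _ => (hPh i).le)
    rw [hC, hC, hC, hC]
    set a := (∑ i ∈ A, P i * h i) / σ2 with ha
    set b := (∑ i ∈ B, P i * h i) / σ2 with hb
    set r := (∑ i ∈ A ∩ B, P i * h i) / σ2 with hr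
    have hru : (∑ i ∈ A ∪ B, P i * h i) / σ2 = a + b - r := by
      rw [ha, hb, hr, ← add_div, div_sub_div_same]
      congr 1
      linarith
    rw [hru]
    have h0r : 0 ≤ r := div_nonneg (hS0 _) hσ.le
    have h0a : 0 ≤ a := div_nonneg (hS0 _) hσ.le
    have h0b : 0 ≤ b := div_nonneg (hS0 _) hσ.le
    have hra : r ≤ a := by rw [hr, ha]; gcongr
    have hrb : r ≤ b := by rw [hr, hb]; gcongr
    have p1 : (0:ℝ) < 1 + (a + b - r) := by linarith
    have p2 : (0:ℝ) < 1 + r := by linarith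
    have p3 : (0:ℝ) < 1 + a := by linarith
    have p4 : (0:ℝ) < 1 + b := by linarith
    rw [← Real.log_mul p1.ne' p2.ne', ← Real.log_mul p3.ne' p4.ne']
    apply Real.log_le_log (by positivity)
    nlinarith [mul_nonneg (sub_nonneg.2 hra) (sub_nonneg.2 hrb)]
  -- union of tight sets is tight
  have tight_union : ∀ α ∈ 𝒞, ∀ A B : Finset (Fin N),
      (∑ i ∈ A, α i = C A) → (∑ i ∈ B, α i = C B) →
      ∑ i ∈ A ∪ B, α i = C (A ∪ B) := by
    intro α hα A B hA hB
    have h1 := hle α hα (A ∪ B)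
    have h2 := hle α hα (A ∩ B)
    have h3 : (∑ i ∈ A ∪ B, α i) + ∑ i ∈ A ∩ B, α i
        = (∑ i ∈ A, α i) + ∑ i ∈ B, α i := Finset.sum_union_inter
    have h4 := hsub A B
    linarith
  -- characterization of Nash equilibria: α ∈ 𝒞 with total sum tight
  have hchar : ∀ α : Fin N → ℝ,
      (α ∈ 𝒞 ∧ ∀ i : Fin N, ∀ x : ℝ, 0 ≤ x → Function.update α i x ∈ 𝒞 →
          u i (Function.update α i x) ≤ u i α)
      ↔ (α ∈ 𝒞 ∧ ∑ i, α i = C Finset.univ) := by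
    intro α
    constructor
    · rintro ⟨hα, hNE⟩
      refine ⟨hα, ?_⟩
      have key : ∀ i : Fin N, ∃ Ω : Finset (Fin N), i ∈ Ω ∧ ∑ j ∈ Ω, α j = C Ω := by
        intro i
        by_contra hcon
        push_neg at hcon
        have hlt : ∀ Ω : Finset (Fin N), i ∈ Ω → ∑ j ∈ Ω, α j < C Ω :=
          fun Ω hi => lt_of_le_of_ne (hle α hα Ω) (hcon Ω hi)
        set F : Finset (Finset (Fin N)) :=
          Finset.univ.filter (fun Ω : Finset (Fin N) => i ∈ Ω) with hF
        have hFne : F.Nonempty := ⟨{i}, by simp [hF]⟩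
        set ε := F.inf' hFne (fun Ω => C Ω - ∑ j ∈ Ω, α j) with hε
        have hεpos : 0 < ε := by
          rw [hε]
          rw [Finset.lt_inf'_iff]
          intro Ω hΩ
          have hiΩ : i ∈ Ω := by simpa [hF] using hΩ
          exact sub_pos.2 (hlt Ω hiΩ)
        have hαi : 0 ≤ α i := ((h𝒞 α).1 hα).1 i
        have hupd : Function.update α i (α i + ε) ∈ 𝒞 := by
          rw [h𝒞]
          constructor
          · intro j
            by_cases hj : j = i
            · subst hj; rw [Function.update_self]; linarith
            · rw [Function.update_of_ne hj]; exact ((h𝒞 α).1 hα).1 j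
          · intro Ω hΩne
            by_cases hiΩ : i ∈ Ω
            · have hsum : ∑ j ∈ Ω, Function.update α i (α i + ε) j
                  = (∑ j ∈ Ω, α j) + ε := by
                rw [Finset.sum_update_of_mem hiΩ,
                  ← Finset.sum_erase_add Ω α hiΩ, Finset.sdiff_singleton_eq_erase]
                ring
              rw [hsum]
              have hεle : ε ≤ C Ω - ∑ j ∈ Ω, α j := by
                rw [hε]
                exact Finset.inf'_le _ (by simp [hF, hiΩ])
              linarith
            · have hsum : ∑ j ∈ Ω, Function.update α i (α i + ε) j
                  = ∑ j ∈ Ω, α j :=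
                Finset.sum_congr rfl fun j hj => by
                  have hji : j ≠ i := fun hji => hiΩ (hji ▸ hj)
                  rw [Function.update_of_ne hji]
              rw [hsum]
              exact hle α hα Ω
        have hNEi := hNE i (α i + ε) (by linarith) hupd
        rw [hu, hu, if_pos hupd, if_pos hα, Function.update_self] at hNEi
        have : g i (α i) < g i (α i + ε) :=
          hg i (Set.mem_Ici.2 hαi) (Set.mem_Ici.2 (by linarith)) (by linarith)
        linarith
      choose Ω hΩmem hΩtight using key
      have hall : ∀ s : Finset (Fin N), ∑ j ∈ s.sup Ω, α j = C (s.sup Ω) := by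
        intro s
        induction s using Finset.induction_on with
        | empty => simpa using hCempty.symm
        | insert _ _ hx ih =>
          rw [Finset.sup_insert, Finset.sup_eq_union]
          exact tight_union α hα _ _ (hΩtight _) ih
      have hsupuniv : (Finset.univ : Finset (Fin N)).sup Ω = Finset.univ := by
        apply Finset.eq_univ_of_forall
        intro j
        exact Finset.mem_sup.2 ⟨j, Finset.mem_univ j, hΩmem j⟩
      have := hall Finset.univ
      rwa [hsupuniv] at this
    · rintro ⟨hα, htight⟩
      refine ⟨hα, ?_⟩
      intro i x hx hupd
      rw [hu, hu, if_pos hupd, if_pos hα, Function.update_self]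
      have hαi : 0 ≤ α i := ((h𝒞 α).1 hα).1 i
      have hs : ∑ j, Function.update α i x j = (∑ j, α j) - α i + x := by
        rw [Finset.sum_update_of_mem (Finset.mem_univ i),
          ← Finset.sum_erase_add Finset.univ α (Finset.mem_univ i),
          Finset.sdiff_singleton_eq_erase]
        ring
      have hbound := hle _ hupd Finset.univ
      rw [hs, htight] at hbound
      have hxle : x ≤ α i := by linarith
      exact (hg i).monotoneOn (Set.mem_Ici.2 hx) (Set.mem_Ici.2 hαi) hxle
  constructor
  · intro α hα β hβ a b ha hb hab
    rw [Set.mem_setOf_eq] at hα hβ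
    rw [Set.mem_setOf_eq, hchar]
    rw [hchar] at hα hβ
    obtain ⟨hα𝒞, hαt⟩ := hα
    obtain ⟨hβ𝒞, hβt⟩ := hβ
    have hcomb : ∀ i, (a • α + b • β) i = a * α i + b * β i := fun i => rfl
    have hsum : ∀ Ω : Finset (Fin N), ∑ i ∈ Ω, (a • α + b • β) i
        = a * (∑ i ∈ Ω, α i) + b * (∑ i ∈ Ω, β i) := by
      intro Ω
      simp only [Pi.add_apply, Pi.smul_apply, smul_eq_mul]
      rw [Finset.mul_sum, Finset.mul_sum, ← Finset.sum_add_distrib]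
    constructor
    · rw [h𝒞]
      constructor
      · intro i
        rw [hcomb]
        exact add_nonneg (mul_nonneg ha (((h𝒞 α).1 hα𝒞).1 i))
          (mul_nonneg hb (((h𝒞 β).1 hβ𝒞).1 i))
      · intro Ω hΩne
        rw [hsum]
        have h1 := ((h𝒞 α).1 hα𝒞).2 Ω hΩne
        have h2 := ((h𝒞 β).1 hβ𝒞).2 Ω hΩne
        have hC1 : a * C Ω + b * C Ω = C Ω := by rw [← add_mul, hab, one_mul]
        nlinarith [mul_le_mul_of_nonneg_left h1 ha, mul_le_mul_of_nonneg_left h2 hb]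
    · rw [hsum, hαt, hβt, ← add_mul, hab, one_mul]
  · intro α hα
    exact hα.1
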